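/- For every a > 0, the measure (x²/a² − 1/6) dx is a Steffensen-Popoviciu measure on the interval [−a, a]; that is, its total mass ∫_{−a}^{a} (x²/a² − 1/6) dx = a/3 is positive and ∫_{−a}^{a} f(x) (x²/a² − 1/6) dx ≥ 0 for every continuous convex function f : [−a,a] → [0,∞). -/

import Mathlib

open MeasureTheory intervalIntegral

lemma affine_weight_integral (a : ℝ) (ha : 0 < a) (A B : ℝ) :
    ∫ x in (-a)..a, (A + B * x) * (x ^ 2 / a ^ 2 - 1 / 6) = A * (a / 3) := by
  have ha' : a ≠ 0 := ne_of_gt ha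
  have hF : ∀ x ∈ Set.uIcc (-a) a,
      HasDerivAt (fun x : ℝ => A * x ^ 3 / (3 * a ^ 2) - A * x / 6
        + (B * x ^ 4 / (4 * a ^ 2) - B * x ^ 2 / 12))
        ((A + B * x) * (x ^ 2 / a ^ 2 - 1 / 6)) x := by
    intro x _
    have h := ((((hasDerivAt_pow 3 x).const_mul A).div_const (3 * a ^ 2)).sub
        (((hasDerivAt_id x).const_mul A).div_const 6)).add
      ((((hasDerivAt_pow 4 x).const_mul B).div_const (4 * a ^ 2)).sub
        (((hasDerivAt_pow 2 x).const_mul B).div_const 12))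
    refine h.congr_deriv ?_
    field_simp
    ring
  have hint : IntervalIntegrable (fun x : ℝ => (A + B * x) * (x ^ 2 / a ^ 2 - 1 / 6))
      volume (-a) a := by
    apply Continuous.intervalIntegrable
    continuity
  rw [intervalIntegral.integral_eq_sub_of_hasDerivAt hF hint]
  field_simp
  ring

theorem quadratic_weight_SP_measure
    (a : ℝ) (ha : 0 < a) :
    ((∫ x in (-a)..a, (x ^ 2 / a ^ 2 - 1 / 6)) = a / 3 ∧
        (0 : ℝ) < a / 3) ∧
      ∀ f : ℝ → ℝ, ContinuousOn f (Set.Icc (-a) a) →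
        ConvexOn ℝ (Set.Icc (-a) a) f →
        (∀ x ∈ Set.Icc (-a) a, 0 ≤ f x) →
        0 ≤ ∫ x in (-a)..a, f x * (x ^ 2 / a ^ 2 - 1 / 6) := by
  have ha' : a ≠ 0 := ne_of_gt ha
  constructor
  · constructor
    · have h := affine_weight_integral a ha 1 0
      simpa using h
    · positivity
  intro f hfc hconv hfnn
  -- the critical point c = a / √6, made opaque
  obtain ⟨c, hcpos, hclt, hc2⟩ : ∃ c : ℝ, 0 < c ∧ c < a ∧ c ^ 2 = a ^ 2 / 6 := by
    have h6 : (0:ℝ) < Real.sqrt 6 := Real.sqrt_pos.mpr (by norm_num)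
    have h6' : (1:ℝ) < Real.sqrt 6 := by
      nlinarith [Real.sq_sqrt (show (0:ℝ) ≤ 6 by norm_num)]
    exact ⟨a / Real.sqrt 6, div_pos ha h6, div_lt_self ha h6',
      by rw [div_pow, Real.sq_sqrt (by norm_num : (0:ℝ) ≤ 6)]⟩
  have hcne : c ≠ 0 := ne_of_gt hcpos
  have h2c : (0:ℝ) < 2 * c := by linarith
  -- weight rewriting
  have hw : ∀ x : ℝ, x ^ 2 / a ^ 2 - 1 / 6 = (x ^ 2 - c ^ 2) / a ^ 2 := by
    intro x
    rw [hc2]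
    field_simp
  have hmemc : c ∈ Set.Icc (-a) a := ⟨by linarith, le_of_lt hclt⟩
  have hmemnc : -c ∈ Set.Icc (-a) a := ⟨by linarith, by linarith⟩
  set m : ℝ := (f c - f (-c)) / (2 * c) with hm
  set L : ℝ → ℝ := fun x => f (-c) + m * (x + c) with hL
  have hmc : m * (2 * c) = f c - f (-c) := by
    rw [hm]; field_simp
  -- pointwise inequality
  have key : ∀ x ∈ Set.Icc (-a) a,
      L x * (x ^ 2 / a ^ 2 - 1 / 6) ≤ f x * (x ^ 2 / a ^ 2 - 1 / 6) := by
    intro x hx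
    obtain ⟨hx1, hx2⟩ := hx
    rcases le_or_gt x (-c) with h1 | h1
    · -- x ≤ -c : weight ≥ 0, f x ≥ L x
      have hwnn : 0 ≤ x ^ 2 / a ^ 2 - 1 / 6 := by
        rw [hw]
        apply div_nonneg _ (by positivity)
        nlinarith
      rcases eq_or_lt_of_le h1 with h1e | h1l
      · rw [h1e]
        have : L (-c) = f (-c) := by simp [hL]
        rw [this]
      · have hs := hconv.slope_mono_adjacent (x := x) (y := -c) (z := c)
          ⟨hx1, hx2⟩ hmemc h1l (by linarith)
        rw [div_le_div_iff₀ (by linarith) (by linarith)] at hs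
        have hfL : L x ≤ f x := by
          rw [hL]
          simp only
          have h' : m * (x + c) ≤ f x - f (-c) := by
            rw [hm, div_mul_eq_mul_div, div_le_iff₀ h2c]
            nlinarith
          linarith
        exact mul_le_mul_of_nonneg_right hfL hwnn
    · rcases le_or_gt x c with h2 | h2
      · -- -c < x ≤ c : weight ≤ 0, f x ≤ L x
        have hwnp : x ^ 2 / a ^ 2 - 1 / 6 ≤ 0 := by
          rw [hw]
          apply div_nonpos_of_nonpos_of_nonneg _ (by positivity)
          nlinarith
        have hfL : f x ≤ L x := by
          have ht0 : 0 ≤ (c - x) / (2 * c) := div_nonneg (by linarith) (by linarith)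
          have ht1 : 0 ≤ (x + c) / (2 * c) := div_nonneg (by linarith) (by linarith)
          have hts : (c - x) / (2 * c) + (x + c) / (2 * c) = 1 := by
            field_simp
            ring
          have hcomb := hconv.2 hmemnc hmemc ht0 ht1 hts
          simp only [smul_eq_mul] at hcomb
          have hxeq : (c - x) / (2 * c) * -c + (x + c) / (2 * c) * c = x := by
            field_simp
            ring
          rw [hxeq] at hcomb
          refine hcomb.trans (le_of_eq ?_)
          rw [hL]
          simp only
          rw [hm]
          field_simp
          ring
        exact mul_le_mul_of_nonpos_right hfL hwnp
      · -- c < x : weight ≥ 0, f x ≥ L x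
        have hwnn : 0 ≤ x ^ 2 / a ^ 2 - 1 / 6 := by
          rw [hw]
          apply div_nonneg _ (by positivity)
          nlinarith
        have hs := hconv.slope_mono_adjacent (x := -c) (y := c) (z := x)
          hmemnc ⟨hx1, hx2⟩ (by linarith) h2
        rw [div_le_div_iff₀ (by linarith) (by linarith)] at hs
        have hfL : L x ≤ f x := by
          rw [hL]
          simp only
          have h' : m * (x + c) ≤ f x - f (-c) := by
            rw [hm, div_mul_eq_mul_div, div_le_iff₀ h2c]
            nlinarith
          linarith
        exact mul_le_mul_of_nonneg_right hfL hwnn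
  -- integrability
  have hwcont : Continuous (fun x : ℝ => x ^ 2 / a ^ 2 - 1 / 6) :=
    ((continuous_pow 2).div_const (a ^ 2)).sub continuous_const
  have hintf : IntervalIntegrable (fun x => f x * (x ^ 2 / a ^ 2 - 1 / 6))
      volume (-a) a := by
    apply ContinuousOn.intervalIntegrable
    apply ContinuousOn.mul
    · rwa [Set.uIcc_of_le (by linarith : -a ≤ a)]
    · exact hwcont.continuousOn
  have hintL : IntervalIntegrable (fun x => L x * (x ^ 2 / a ^ 2 - 1 / 6))
      volume (-a) a := by
    apply Continuous.intervalIntegrable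
    exact (continuous_const.add (continuous_const.mul
      (continuous_id.add continuous_const))).mul hwcont
  -- monotonicity of the integral
  have hmono := intervalIntegral.integral_mono_on (by linarith : -a ≤ a) hintL hintf
    (fun x hx => key x hx)
  refine le_trans ?_ hmono
  have hLform : ∀ x : ℝ, L x * (x ^ 2 / a ^ 2 - 1 / 6)
      = ((f (-c) + m * c) + m * x) * (x ^ 2 / a ^ 2 - 1 / 6) := by
    intro x
    rw [hL]
    ring
  rw [intervalIntegral.integral_congr (fun x _ => hLform x),
    affine_weight_integral a ha (f (-c) + m * c) m]
  have hA : f (-c) + m * c = (f (-c) + f c) / 2 := by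
    rw [hm]
    field_simp
    ring
  rw [hA]
  have h1 := hfnn (-c) hmemnc
  have h2 := hfnn c hmemc
  have : (0:ℝ) ≤ (f (-c) + f c) / 2 := by linarith
  exact mul_nonneg this (by positivity)
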